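/- Let 0 < a < 1 and let b ≥ 2 be an integer with a·b > 1, and set α = -ln(a)/ln(b) ∈ (0,1). Then the Weierstrass function W(t) = ∑_{n=0}^∞ aⁿ cos(bⁿ π t) is α-Hölder continuous on [0,1]: there exists C > 0 such that |W(t) - W(s)| ≤ C|t-s|^α for all s, t ∈ [0,1]. -/

import Mathlib

open Real

lemma cos_lip_aux (x y : ℝ) : |Real.cos x - Real.cos y| ≤ |x - y| := by
  rw [Real.cos_sub_cos, abs_mul, abs_mul]
  have h2 : |(-2 : ℝ)| = 2 := by norm_num
  have hs1 : |Real.sin ((x + y) / 2)| ≤ 1 := Real.abs_sin_le_one _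
  have hs2 : |Real.sin ((x - y) / 2)| ≤ |(x - y) / 2| := Real.abs_sin_le_abs
  calc |(-2:ℝ)| * |Real.sin ((x + y) / 2)| * |Real.sin ((x - y) / 2)|
      ≤ 2 * 1 * |(x - y) / 2| := by
        rw [h2]
        apply mul_le_mul _ hs2 (abs_nonneg _) (by norm_num)
        exact mul_le_mul_of_nonneg_left hs1 (by norm_num)
    _ = |x - y| := by
        rw [abs_div]
        simp
        ring
  
set_option maxHeartbeats 2000000 in
theorem weierstrass_holder
    (a : ℝ) (b : ℕ) (ha0 : 0 < a) (ha1 : a < 1) (hb : 2 ≤ b)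
    (hab : 1 < a * b) (α : ℝ) (hα : α = -Real.log a / Real.log b)
    (W : ℝ → ℝ) (hW : ∀ t, W t = ∑' n : ℕ, a ^ n * Real.cos (b ^ n * π * t)) :
    ∃ C > 0, ∀ s ∈ Set.Icc (0:ℝ) 1, ∀ t ∈ Set.Icc (0:ℝ) 1,
      |W t - W s| ≤ C * |t - s| ^ α := by
  classical
  have hb1 : (1:ℝ) < (b:ℝ) := by exact_mod_cast lt_of_lt_of_le one_lt_two hb
  have hb0 : (0:ℝ) < (b:ℝ) := lt_trans one_pos hb1
  have hlogb : 0 < Real.log b := Real.log_pos hb1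
  have hloga : Real.log a < 0 := Real.log_neg ha0 ha1
  have hα0 : 0 < α := by rw [hα]; exact div_pos (by linarith) hlogb
  have hα1 : α < 1 := by
    rw [hα, div_lt_one hlogb]
    have h := Real.log_pos hab
    rw [Real.log_mul (ne_of_gt ha0) (ne_of_gt hb0)] at h
    linarith
  have hba : (b:ℝ) ^ (-α) = a := by
    rw [hα, Real.rpow_def_of_pos hb0, neg_div, neg_neg, mul_comm,
      div_mul_cancel₀ _ (ne_of_gt hlogb), Real.exp_log ha0]
  have hsum : ∀ t : ℝ, Summable (fun n : ℕ => a ^ n * Real.cos ((b:ℝ) ^ n * π * t)) := by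
    intro t
    apply Summable.of_norm_bounded (summable_geometric_of_lt_one ha0.le ha1)
    intro n
    rw [norm_mul, norm_pow, Real.norm_eq_abs, Real.norm_eq_abs, abs_of_pos ha0]
    calc a ^ n * |Real.cos ((b:ℝ) ^ n * π * t)| ≤ a ^ n * 1 :=
          mul_le_mul_of_nonneg_left (Real.abs_cos_le_one _) (pow_nonneg ha0.le n)
      _ = a ^ n := mul_one _
  have hab0 : (0:ℝ) < a * b - 1 := by linarith
  have h1a : (0:ℝ) < 1 - a := by linarith
  set C : ℝ := π * (b:ℝ) ^ (1 - α) / (a * b - 1) + 2 / (1 - a) with hC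
  have hC0 : 0 < C := by
    apply add_pos
    · exact div_pos (mul_pos Real.pi_pos (Real.rpow_pos_of_pos hb0 _)) hab0
    · exact div_pos (by norm_num) h1a
  refine ⟨C, hC0, ?_⟩
  intro s hs t ht
  rcases eq_or_ne t s with rfl | hts
  · simp [Real.zero_rpow (ne_of_gt hα0)]
  -- now t ≠ s
  set h : ℝ := |t - s| with hh
  have hhpos : 0 < h := abs_pos.mpr (sub_ne_zero.mpr hts)
  have hh1 : h ≤ 1 := by
    rw [hh, abs_sub_le_iff]
    obtain ⟨hs0, hs1⟩ := hs; obtain ⟨ht0, ht1⟩ := ht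
    constructor <;> linarith
  -- choose N
  obtain ⟨N, hN1, hN2⟩ : ∃ N : ℕ, 1 / h ≤ (b:ℝ) ^ N ∧ (b:ℝ) ^ N ≤ (b:ℝ) / h := by
    obtain ⟨M, hM⟩ := pow_unbounded_of_one_lt (1 / h) hb1
    have hex : ∃ n : ℕ, 1 / h ≤ (b:ℝ) ^ n := ⟨M, hM.le⟩
    refine ⟨Nat.find hex, Nat.find_spec hex, ?_⟩
    set N : ℕ := Nat.find hex with hN
    rcases Nat.eq_zero_or_pos N with h0 | hpos
    · rw [h0, pow_zero, le_div_iff₀ hhpos, one_mul]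
      exact hh1.trans hb1.le
    · have hmin := Nat.find_min hex (Nat.sub_lt hpos one_pos)
      push_neg at hmin
      have hlt : (b:ℝ) ^ (N - 1) < 1 / h := hmin
      have hNN : N - 1 + 1 = N := Nat.succ_pred_eq_of_pos hpos
      calc (b:ℝ) ^ N = (b:ℝ) ^ (N - 1) * b := by rw [← pow_succ, hNN]
        _ ≤ (1 / h) * b := mul_le_mul_of_nonneg_right hlt.le hb0.le
        _ = (b:ℝ) / h := by ring
  -- key estimates
  have hbinv : (b:ℝ) ^ (-(N:ℝ)) ≤ h := by
    rw [Real.rpow_neg hb0.le, Real.rpow_natCast]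
    rw [inv_le_comm₀ (pow_pos hb0 N) hhpos]
    rwa [one_div] at hN1
  have hA : a ^ N ≤ h ^ α := by
    have : a ^ N = ((b:ℝ) ^ (-(N:ℝ))) ^ α := by
      rw [← hba, ← Real.rpow_natCast ((b:ℝ) ^ (-α)) N, ← Real.rpow_mul hb0.le,
        ← Real.rpow_mul hb0.le]
      ring_nf
    rw [this]
    exact Real.rpow_le_rpow (Real.rpow_nonneg hb0.le _) hbinv hα0.le
  have hB : (a * b) ^ N * h ≤ (b:ℝ) ^ (1 - α) * h ^ α := by
    have e1 : (a * b) ^ N = ((b:ℝ) ^ (N:ℝ)) ^ (1 - α) := by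
      rw [← Real.rpow_mul hb0.le, mul_pow, ← hba,
        ← Real.rpow_natCast ((b:ℝ) ^ (-α)) N, ← Real.rpow_mul hb0.le,
        ← Real.rpow_natCast (b:ℝ) N, ← Real.rpow_add hb0]
      congr 1
      push_cast
      ring
    have hN2' : (b:ℝ) ^ (N:ℝ) ≤ (b:ℝ) / h := by
      rw [Real.rpow_natCast]; exact hN2
    have e2 : ((b:ℝ) ^ (N:ℝ)) ^ (1 - α) ≤ ((b:ℝ) / h) ^ (1 - α) :=
      Real.rpow_le_rpow (Real.rpow_nonneg hb0.le _) hN2' (by linarith)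
    have e3 : ((b:ℝ) / h) ^ (1 - α) * h = (b:ℝ) ^ (1 - α) * h ^ α := by
      rw [Real.div_rpow hb0.le hhpos.le, div_mul_eq_mul_div, mul_div_assoc]
      congr 1
      rw [div_eq_iff (ne_of_gt (Real.rpow_pos_of_pos hhpos _)), ← Real.rpow_add hhpos]
      have : α + (1 - α) = 1 := by ring
      rw [this, Real.rpow_one]
    calc (a * b) ^ N * h ≤ ((b:ℝ) / h) ^ (1 - α) * h := by
          rw [e1]; exact mul_le_mul_of_nonneg_right e2 hhpos.le
      _ = _ := e3
  -- the difference as a tsum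
  set g : ℕ → ℝ := fun n =>
    a ^ n * (Real.cos ((b:ℝ) ^ n * π * t) - Real.cos ((b:ℝ) ^ n * π * s)) with hg
  have hgabs_le2 : ∀ n, |g n| ≤ 2 * a ^ n := by
    intro n
    rw [hg, abs_mul, abs_pow, abs_of_pos ha0]
    calc a ^ n * |Real.cos ((b:ℝ) ^ n * π * t) - Real.cos ((b:ℝ) ^ n * π * s)|
        ≤ a ^ n * 2 := by
          apply mul_le_mul_of_nonneg_left _ (pow_nonneg ha0.le n)
          calc |Real.cos _ - Real.cos _| ≤ |Real.cos ((b:ℝ) ^ n * π * t)| +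
                |Real.cos ((b:ℝ) ^ n * π * s)| := abs_sub _ _
            _ ≤ 1 + 1 := add_le_add (Real.abs_cos_le_one _) (Real.abs_cos_le_one _)
            _ = 2 := by norm_num
      _ = 2 * a ^ n := mul_comm _ _
  have hgabs_lip : ∀ n, |g n| ≤ π * (a * b) ^ n * h := by
    intro n
    rw [hg, abs_mul, abs_pow, abs_of_pos ha0]
    calc a ^ n * |Real.cos ((b:ℝ) ^ n * π * t) - Real.cos ((b:ℝ) ^ n * π * s)|
        ≤ a ^ n * ((b:ℝ) ^ n * π * h) := by
          apply mul_le_mul_of_nonneg_left _ (pow_nonneg ha0.le n)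
          calc |Real.cos _ - Real.cos _| ≤ |(b:ℝ) ^ n * π * t - (b:ℝ) ^ n * π * s| :=
                cos_lip_aux _ _
            _ = (b:ℝ) ^ n * π * h := by
                rw [hh, ← mul_sub, abs_mul, abs_of_pos (mul_pos (pow_pos hb0 n) Real.pi_pos)]
      _ = π * (a * b) ^ n * h := by rw [mul_pow]; ring
  have hgsum : Summable fun n => |g n| := by
    apply Summable.of_nonneg_of_le (fun n => abs_nonneg _) hgabs_le2
    exact (summable_geometric_of_lt_one ha0.le ha1).mul_left 2
  have hWdiff : W t - W s = ∑' n, g n := by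
    rw [hW t, hW s, ← Summable.tsum_sub (hsum t) (hsum s)]
    apply tsum_congr
    intro n
    simp only [hg]
    ring
  have hmain : |W t - W s| ≤ ∑' n, |g n| := by
    calc |W t - W s| = ‖∑' n, g n‖ := by rw [hWdiff, Real.norm_eq_abs]
      _ ≤ ∑' n, ‖g n‖ :=
          norm_tsum_le_tsum_norm (by simpa only [Real.norm_eq_abs] using hgsum)
      _ = ∑' n, |g n| := by simp only [Real.norm_eq_abs]
  have hsplit : ∑' n, |g n| = (∑ i ∈ Finset.range N, |g i|) + ∑' n, |g (n + N)| :=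
    (Summable.sum_add_tsum_nat_add N hgsum).symm
  -- head bound
  have hhead : (∑ i ∈ Finset.range N, |g i|) ≤ π * (b:ℝ) ^ (1 - α) / (a * b - 1) * h ^ α := by
    calc (∑ i ∈ Finset.range N, |g i|)
        ≤ ∑ i ∈ Finset.range N, π * (a * b) ^ i * h :=
          Finset.sum_le_sum fun i _ => hgabs_lip i
      _ = π * h * ∑ i ∈ Finset.range N, (a * b) ^ i := by
          rw [Finset.mul_sum]; apply Finset.sum_congr rfl; intro i _; ring
      _ = π * h * (((a * b) ^ N - 1) / (a * b - 1)) := by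
          rw [geom_sum_eq (ne_of_gt hab)]
      _ ≤ π * h * ((a * b) ^ N / (a * b - 1)) := by
          apply mul_le_mul_of_nonneg_left _ (mul_pos Real.pi_pos hhpos).le
          apply (div_le_div_iff_of_pos_right hab0).mpr
          linarith
      _ = π / (a * b - 1) * ((a * b) ^ N * h) := by ring
      _ ≤ π / (a * b - 1) * ((b:ℝ) ^ (1 - α) * h ^ α) := by
          apply mul_le_mul_of_nonneg_left hB (div_pos Real.pi_pos hab0).le
      _ = π * (b:ℝ) ^ (1 - α) / (a * b - 1) * h ^ α := by ring
  -- tail bound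
  have htail : (∑' n, |g (n + N)|) ≤ 2 / (1 - a) * h ^ α := by
    have hs2 : Summable fun n : ℕ => 2 * a ^ N * a ^ n :=
      (summable_geometric_of_lt_one ha0.le ha1).mul_left _
    have hle : ∀ n : ℕ, |g (n + N)| ≤ 2 * a ^ N * a ^ n := by
      intro n
      calc |g (n + N)| ≤ 2 * a ^ (n + N) := hgabs_le2 _
        _ = 2 * a ^ N * a ^ n := by rw [pow_add]; ring
    have hgsum' : Summable fun n : ℕ => |g (n + N)| :=
      Summable.of_nonneg_of_le (fun n => abs_nonneg _) hle hs2
    have h2 : (0:ℝ) ≤ (1 - a)⁻¹ := inv_nonneg.mpr h1a.le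
    calc (∑' n, |g (n + N)|) ≤ ∑' n : ℕ, 2 * a ^ N * a ^ n := Summable.tsum_le_tsum hle hgsum' hs2
      _ = 2 * a ^ N * ∑' n : ℕ, a ^ n := tsum_mul_left
      _ = 2 * a ^ N * (1 - a)⁻¹ := by rw [tsum_geometric_of_lt_one ha0.le ha1]
      _ ≤ 2 * h ^ α * (1 - a)⁻¹ :=
          mul_le_mul_of_nonneg_right (by linarith [hA]) h2
      _ = 2 / (1 - a) * h ^ α := by rw [div_eq_mul_inv]; ring
  calc |W t - W s| ≤ ∑' n, |g n| := hmain
    _ = (∑ i ∈ Finset.range N, |g i|) + ∑' n, |g (n + N)| := hsplit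
    _ ≤ π * (b:ℝ) ^ (1 - α) / (a * b - 1) * h ^ α + 2 / (1 - a) * h ^ α :=
        add_le_add hhead htail
    _ = C * h ^ α := by rw [hC]; ring
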